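/- Let k be an integer with k > 1. The assignment a ↦ (1,0), b ↦ (0,1) extends to a group isomorphism from the one-relator presented group BS(1,k) = ⟨a, b ∣ b⁻¹ a b = a^k⟩ onto the semidirect product G = ℤ[1/k] ⋊ ℤ. -/

import Mathlib

/-- The subring `ℤ[1/k] = {z·k^i : z, i ∈ ℤ}` of `ℚ`, as a set. -/
def zkSet (k : ℤ) : Set ℚ := {q | ∃ z i : ℤ, q = (z : ℚ) * (k : ℚ) ^ i}

theorem zkSet_neg {k : ℤ} {q : ℚ} (hq : q ∈ zkSet k) : -q ∈ zkSet k := by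
  obtain ⟨z, i, rfl⟩ := hq
  exact ⟨-z, i, by push_cast; ring⟩

theorem zkSet_mul_zpow {k : ℤ} (hk : (k : ℚ) ≠ 0) {q : ℚ} (hq : q ∈ zkSet k) (j : ℤ) :
    q * (k : ℚ) ^ j ∈ zkSet k := by
  obtain ⟨z, i, rfl⟩ := hq
  exact ⟨z, i + j, by rw [zpow_add₀ hk]; ring⟩

theorem zkSet_add {k : ℤ} (hk : (k : ℚ) ≠ 0) {p q : ℚ}
    (hp : p ∈ zkSet k) (hq : q ∈ zkSet k) : p + q ∈ zkSet k := by
  obtain ⟨z₁, i₁, rfl⟩ := hp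
  obtain ⟨z₂, i₂, rfl⟩ := hq
  rcases le_total i₁ i₂ with h | h
  · refine ⟨z₁ + z₂ * k ^ (i₂ - i₁).toNat, i₁, ?_⟩
    have hpow : ((k : ℚ)) ^ ((i₂ - i₁).toNat) = (k : ℚ) ^ (i₂ - i₁) := by
      rw [← zpow_natCast, Int.toNat_of_nonneg (by omega)]
    push_cast
    rw [hpow]
    have e : (k : ℚ) ^ (i₂ - i₁) * (k : ℚ) ^ i₁ = (k : ℚ) ^ i₂ := by
      rw [← zpow_add₀ hk, show i₂ - i₁ + i₁ = i₂ from by omega]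
    linear_combination (-(z₂ : ℚ)) * e
  · refine ⟨z₂ + z₁ * k ^ (i₁ - i₂).toNat, i₂, ?_⟩
    have hpow : ((k : ℚ)) ^ ((i₁ - i₂).toNat) = (k : ℚ) ^ (i₁ - i₂) := by
      rw [← zpow_natCast, Int.toNat_of_nonneg (by omega)]
    push_cast
    rw [hpow]
    have e : (k : ℚ) ^ (i₁ - i₂) * (k : ℚ) ^ i₂ = (k : ℚ) ^ i₁ := by
      rw [← zpow_add₀ hk, show i₁ - i₂ + i₂ = i₁ from by omega]
    linear_combination (-(z₁ : ℚ)) * e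

/-- The underlying set of the semidirect product `G = ℤ[1/k] ⋊ ℤ` (modelled inside
`ℚ × ℤ`): pairs `(y, m)` with multiplication `(y₁,m₁)(y₂,m₂) = (y₁ + y₂·k^{-m₁}, m₁+m₂)`. -/
@[ext]
structure BSQ (k : ℤ) : Type where
  y : ℚ
  m : ℤ

namespace BSQ

variable {k : ℤ}

instance : Mul (BSQ k) := ⟨fun g h => ⟨g.y + h.y * (k : ℚ) ^ (-g.m), g.m + h.m⟩⟩
instance : One (BSQ k) := ⟨⟨0, 0⟩⟩
instance : Inv (BSQ k) := ⟨fun g => ⟨-g.y * (k : ℚ) ^ g.m, -g.m⟩⟩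

@[simp] theorem mul_y (g h : BSQ k) : (g * h).y = g.y + h.y * (k : ℚ) ^ (-g.m) := rfl
@[simp] theorem mul_m (g h : BSQ k) : (g * h).m = g.m + h.m := rfl
@[simp] theorem one_y : (1 : BSQ k).y = 0 := rfl
@[simp] theorem one_m : (1 : BSQ k).m = 0 := rfl
@[simp] theorem inv_y (g : BSQ k) : g⁻¹.y = -g.y * (k : ℚ) ^ g.m := rfl
@[simp] theorem inv_m (g : BSQ k) : g⁻¹.m = -g.m := rfl

theorem kq_ne_zero [Fact (1 < k)] : (k : ℚ) ≠ 0 := by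
  have h : (1 : ℤ) < k := Fact.out
  have h' : (k : ℤ) ≠ 0 := by omega
  exact_mod_cast h'

private theorem mul_assoc' [Fact (1 < k)] (a b c : BSQ k) : a * b * c = a * (b * c) := by
  ext
  · simp only [mul_y, mul_m, neg_add, zpow_add₀ (kq_ne_zero (k := k))]
    ring
  · simp only [mul_m]
    ring

private theorem one_mul' [Fact (1 < k)] (a : BSQ k) : 1 * a = a := by
  ext <;> simp

private theorem mul_one' [Fact (1 < k)] (a : BSQ k) : a * 1 = a := by
  ext <;> simp

private theorem inv_mul_cancel' [Fact (1 < k)] (a : BSQ k) : a⁻¹ * a = 1 := by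
  ext
  · simp only [mul_y, inv_y, inv_m, one_y, neg_neg]
    ring
  · simp only [mul_m, inv_m, one_m]
    ring

/-- The group structure on `ℤ[1/k] ⋊ ℤ` (here on the ambient `ℚ ⋊ ℤ`). -/
instance [Fact (1 < k)] : Group (BSQ k) where
  mul := (· * ·)
  one := 1
  inv := Inv.inv
  mul_assoc := mul_assoc'
  one_mul := one_mul'
  mul_one := mul_one'
  inv_mul_cancel := inv_mul_cancel'

end BSQ

/-- The group `G = ℤ[1/k] ⋊ ℤ`, as the subgroup of `ℚ ⋊ ℤ` of pairs whose first
coordinate lies in `ℤ[1/k]`. -/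
def bsSubgroup (k : ℤ) [Fact (1 < k)] : Subgroup (BSQ k) where
  carrier := {g | g.y ∈ zkSet k}
  one_mem' := ⟨0, 0, by norm_num⟩
  mul_mem' := by
    intro a b ha hb
    exact zkSet_add BSQ.kq_ne_zero ha (zkSet_mul_zpow BSQ.kq_ne_zero hb _)
  inv_mem' := by
    intro a ha
    exact zkSet_mul_zpow BSQ.kq_ne_zero (zkSet_neg ha) _

theorem mem_bsSubgroup {k : ℤ} [Fact (1 < k)] {g : BSQ k} (h : g.y ∈ zkSet k) :
    g ∈ bsSubgroup k := h

/-- The single relation `b⁻¹·a·b·(a^k)⁻¹` of `BS(1,k) = ⟨a, b ∣ b⁻¹ a b = a^k⟩`,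
with `a = FreeGroup.of true` and `b = FreeGroup.of false`. -/
def bsRels (k : ℤ) : Set (FreeGroup Bool) :=
  {(FreeGroup.of false)⁻¹ * FreeGroup.of true * FreeGroup.of false * ((FreeGroup.of true) ^ k)⁻¹}

section BSAux

variable {k : ℤ} [Fact (1 < k)]

theorem bsq_a_pow (n : ℕ) : ((⟨1, 0⟩ : BSQ k) ^ n) = ⟨(n : ℚ), 0⟩ := by
  induction n with
  | zero => rfl
  | succ n ih =>
    rw [pow_succ, ih]
    ext <;> simp

theorem bsq_a_zpow (n : ℤ) : ((⟨1, 0⟩ : BSQ k) ^ n) = ⟨(n : ℚ), 0⟩ := by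
  obtain ⟨m, rfl | rfl⟩ := n.eq_nat_or_neg
  · rw [zpow_natCast, bsq_a_pow]; norm_cast
  · rw [zpow_neg, zpow_natCast, bsq_a_pow]
    ext <;> simp

theorem bsq_b_pow (n : ℕ) : ((⟨0, 1⟩ : BSQ k) ^ n) = ⟨0, (n : ℤ)⟩ := by
  induction n with
  | zero => rfl
  | succ n ih =>
    rw [pow_succ, ih]
    ext <;> simp

theorem bsq_b_zpow (n : ℤ) : ((⟨0, 1⟩ : BSQ k) ^ n) = ⟨0, n⟩ := by
  obtain ⟨m, rfl | rfl⟩ := n.eq_nat_or_neg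
  · rw [zpow_natCast, bsq_b_pow]
  · rw [zpow_neg, zpow_natCast, bsq_b_pow]
    ext <;> simp

/-- The image of `a`. -/
def Ag (k : ℤ) [Fact (1 < k)] : ↥(bsSubgroup k) := ⟨⟨1, 0⟩, 1, 0, by norm_num⟩
/-- The image of `b`. -/
def Bg (k : ℤ) [Fact (1 < k)] : ↥(bsSubgroup k) := ⟨⟨0, 1⟩, 0, 0, by norm_num⟩

theorem bsRels_lift :
    ∀ r ∈ bsRels k, FreeGroup.lift (fun x : Bool => cond x (Ag k) (Bg k)) r = 1 := by
  intro r hr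
  rw [bsRels, Set.mem_singleton_iff] at hr
  subst hr
  simp only [map_mul, map_inv, map_zpow, FreeGroup.lift_apply_of]
  apply Subtype.ext
  push_cast [SubgroupClass.coe_zpow]
  show ((Bg k : BSQ k)⁻¹ * (Ag k : BSQ k) * (Bg k : BSQ k)) * ((Ag k : BSQ k) ^ k)⁻¹ = 1
  rw [show ((Ag k : BSQ k)) = ⟨1,0⟩ from rfl, show ((Bg k : BSQ k)) = ⟨0,1⟩ from rfl,
    bsq_a_zpow]
  ext
  · simp
  · simp

end BSAux

/-- **BS(1,k) ≅ ℤ[1/k] ⋊ ℤ.** The assignment `a ↦ (1,0)`, `b ↦ (0,1)` extends to a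
group isomorphism from the presented group `⟨a, b ∣ b⁻¹ a b = a^k⟩` onto
`G = ℤ[1/k] ⋊ ℤ`. -/
theorem presentedGroup_iso_bsSubgroup (k : ℤ) [Fact (1 < k)] :
    ∃ φ : PresentedGroup (bsRels k) ≃* ↥(bsSubgroup k),
      ((φ (PresentedGroup.of true) : ↥(bsSubgroup k)) : BSQ k) = ⟨1, 0⟩ ∧
      ((φ (PresentedGroup.of false) : ↥(bsSubgroup k)) : BSQ k) = ⟨0, 1⟩ := by
  have hk : (1 : ℤ) < k := Fact.out
  have hkq : (k : ℚ) ≠ 0 := BSQ.kq_ne_zero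
  set φ₀ : PresentedGroup (bsRels k) →* ↥(bsSubgroup k) :=
    PresentedGroup.toGroup (bsRels_lift (k := k)) with hφ₀
  set a : PresentedGroup (bsRels k) := PresentedGroup.of true with ha
  set b : PresentedGroup (bsRels k) := PresentedGroup.of false with hb
  -- the defining relation in the presented group
  have key : b⁻¹ * a * b = a ^ k := by
    have hmem : ((FreeGroup.of false)⁻¹ * FreeGroup.of true * FreeGroup.of false *
        ((FreeGroup.of true) ^ k)⁻¹) ∈ Subgroup.normalClosure (bsRels k) :=
      Subgroup.subset_normalClosure rfl
    have h1 : (PresentedGroup.mk (bsRels k)) ((FreeGroup.of false)⁻¹ * FreeGroup.of true *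
        FreeGroup.of false * ((FreeGroup.of true) ^ k)⁻¹) = 1 :=
      (QuotientGroup.eq_one_iff _).mpr hmem
    simp only [map_mul, map_inv, map_zpow] at h1
    exact mul_inv_eq_one.mp h1
  have conj1 : ∀ z : ℤ, b⁻¹ * a ^ z * b = a ^ (k * z) := by
    intro z
    have h2 : (b⁻¹ * a * b⁻¹⁻¹) ^ z = b⁻¹ * a ^ z * b⁻¹⁻¹ := conj_zpow
    rw [inv_inv] at h2
    rw [← h2, key, ← zpow_mul]
  have ab : ∀ w : ℤ, a ^ w * b = b * a ^ (k * w) := by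
    intro w
    rw [← conj1 w]
    group
  have push : ∀ (t : ℕ) (z : ℤ), a ^ z * b ^ t = b ^ t * a ^ (z * k ^ t) := by
    intro t
    induction t with
    | zero => intro z; simp
    | succ t ih =>
      intro z
      rw [pow_succ, ← mul_assoc, ih z, mul_assoc, ab, ← mul_assoc, ← pow_succ]
      congr 1
      rw [pow_succ]
      ring_nf
  have push_inv : ∀ (t : ℕ) (z : ℤ), (b ^ t)⁻¹ * a ^ z = a ^ (z * k ^ t) * (b ^ t)⁻¹ := by
    intro t z
    have h := push t z
    have h2 : (b ^ t)⁻¹ * (a ^ z * b ^ t) * (b ^ t)⁻¹ =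
        (b ^ t)⁻¹ * (b ^ t * a ^ (z * k ^ t)) * (b ^ t)⁻¹ := by rw [h]
    group at h2
    group
    exact h2
  -- normal form
  have main : ∀ g : PresentedGroup (bsRels k),
      ∃ (j i : ℕ) (z : ℤ), g = b ^ j * a ^ z * (b ^ i)⁻¹ := by
    intro g
    induction g using PresentedGroup.induction_on with
    | _ w =>
      induction w using FreeGroup.induction_on with
      | C1 => exact ⟨0, 0, 0, by simp⟩
      | of x =>
        have hpx : (PresentedGroup.mk (bsRels k)) (FreeGroup.of x) = PresentedGroup.of x := rfl
        cases x
        · exact ⟨1, 0, 0, by rw [hpx]; simp [hb]⟩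
        · exact ⟨0, 0, 1, by rw [hpx]; simp [ha]⟩
      | inv_of x _ =>
        have hpx : (PresentedGroup.mk (bsRels k)) (FreeGroup.of x) = PresentedGroup.of x := rfl
        cases x
        · refine ⟨0, 1, 0, ?_⟩
          rw [map_inv, hpx]
          simp [hb]
        · refine ⟨0, 0, -1, ?_⟩
          rw [map_inv, hpx]
          simp [ha]
      | mul x y hx hy =>
        obtain ⟨j1, i1, z1, hx⟩ := hx
        obtain ⟨j2, i2, z2, hy⟩ := hy
        rw [map_mul, hx, hy]
        rcases le_total i1 j2 with h | h
        · obtain ⟨t, rfl⟩ : ∃ t, j2 = i1 + t := ⟨j2 - i1, by omega⟩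
          refine ⟨j1 + t, i2, z1 * k ^ t + z2, ?_⟩
          calc b ^ j1 * a ^ z1 * (b ^ i1)⁻¹ * (b ^ (i1 + t) * a ^ z2 * (b ^ i2)⁻¹)
              = b ^ j1 * (a ^ z1 * b ^ t) * a ^ z2 * (b ^ i2)⁻¹ := by
                rw [pow_add]; group
            _ = b ^ j1 * (b ^ t * a ^ (z1 * k ^ t)) * a ^ z2 * (b ^ i2)⁻¹ := by
                rw [push]
            _ = b ^ (j1 + t) * a ^ (z1 * k ^ t + z2) * (b ^ i2)⁻¹ := by
                rw [pow_add, zpow_add]; group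
        · obtain ⟨t, rfl⟩ : ∃ t, i1 = j2 + t := ⟨i1 - j2, by omega⟩
          refine ⟨j1, t + i2, z1 + z2 * k ^ t, ?_⟩
          calc b ^ j1 * a ^ z1 * (b ^ (j2 + t))⁻¹ * (b ^ j2 * a ^ z2 * (b ^ i2)⁻¹)
              = b ^ j1 * a ^ z1 * ((b ^ t)⁻¹ * a ^ z2) * (b ^ i2)⁻¹ := by
                rw [pow_add]; group
            _ = b ^ j1 * a ^ z1 * (a ^ (z2 * k ^ t) * (b ^ t)⁻¹) * (b ^ i2)⁻¹ := by
                rw [push_inv]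
            _ = b ^ j1 * a ^ (z1 + z2 * k ^ t) * (b ^ (t + i2))⁻¹ := by
                rw [pow_add, zpow_add]; group
  have hA : φ₀ a = Ag k := PresentedGroup.toGroup.of _
  have hB : φ₀ b = Bg k := PresentedGroup.toGroup.of _
  -- value of φ₀ on normal forms
  have val : ∀ (j i : ℕ) (z : ℤ),
      ((φ₀ (b ^ j * a ^ z * (b ^ i)⁻¹) : ↥(bsSubgroup k)) : BSQ k) =
        ⟨(z : ℚ) * (k : ℚ) ^ (-(j : ℤ)), (j : ℤ) - (i : ℤ)⟩ := by
    intro j i z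
    rw [map_mul, map_mul, map_inv, map_pow, map_pow, map_zpow, hA, hB]
    push_cast [SubgroupClass.coe_zpow, SubmonoidClass.coe_pow]
    rw [show ((Ag k : BSQ k)) = ⟨1, 0⟩ from rfl, show ((Bg k : BSQ k)) = ⟨0, 1⟩ from rfl,
      bsq_a_zpow, bsq_b_pow, bsq_b_pow]
    ext <;> simp <;> ring
  have hinj : Function.Injective φ₀ := by
    rw [injective_iff_map_eq_one]
    intro g hg
    obtain ⟨j, i, z, rfl⟩ := main g
    have hval : ((φ₀ (b ^ j * a ^ z * (b ^ i)⁻¹) : ↥(bsSubgroup k)) : BSQ k)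
        = (⟨0, 0⟩ : BSQ k) := by rw [hg]; rfl
    rw [val j i z] at hval
    have h1 : (z : ℚ) * (k : ℚ) ^ (-(j : ℤ)) = 0 := congrArg BSQ.y hval
    have h2 : (j : ℤ) - (i : ℤ) = 0 := congrArg BSQ.m hval
    have hz : z = 0 := by
      have := zpow_ne_zero (-(j : ℤ)) hkq
      have : (z : ℚ) = 0 := by
        rcases mul_eq_zero.mp h1 with h | h
        · exact h
        · exact absurd h this
      exact_mod_cast this
    have hij : i = j := by omega
    subst hz hij
    simp
  have hsurj : Function.Surjective φ₀ := by
    rintro ⟨g0, hg0⟩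
    obtain ⟨z, t, hyz⟩ := hg0
    set m : ℤ := g0.m with hm
    set j : ℕ := (max (-t) (max m 0)).toNat with hj
    have hjt : 0 ≤ t + (j : ℤ) := by
      have : -t ≤ (j : ℤ) := by rw [hj]; exact Int.self_le_toNat _ |>.trans' (by omega)
      omega
    have hjm : m ≤ (j : ℤ) := by
      have : max (-t) (max m 0) ≤ (j : ℤ) := Int.self_le_toNat _
      omega
    set i : ℕ := ((j : ℤ) - m).toNat with hi
    set z' : ℤ := z * k ^ (t + (j : ℤ)).toNat with hz'
    refine ⟨b ^ j * a ^ z' * (b ^ i)⁻¹, ?_⟩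
    apply Subtype.ext
    rw [val j i z']
    ext
    · show (z' : ℚ) * (k : ℚ) ^ (-(j : ℤ)) = g0.y
      rw [hyz, hz']
      push_cast
      rw [show ((k : ℚ)) ^ ((t + (j : ℤ)).toNat) = (k : ℚ) ^ (t + (j : ℤ)) by
        rw [← zpow_natCast, Int.toNat_of_nonneg hjt]]
      rw [mul_assoc, ← zpow_add₀ hkq]
      congr 2
      omega
    · show (j : ℤ) - (i : ℤ) = g0.m
      rw [hi, Int.toNat_of_nonneg (by omega)]
      omega
  refine ⟨MulEquiv.ofBijective φ₀ ⟨hinj, hsurj⟩, ?_, ?_⟩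
  · show ((φ₀ a : ↥(bsSubgroup k)) : BSQ k) = ⟨1, 0⟩
    rw [hA]; rfl
  · show ((φ₀ b : ↥(bsSubgroup k)) : BSQ k) = ⟨0, 1⟩
    rw [hB]; rfl
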